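/- The sum over all pairs of coprime positive integers (b,d) of 1/(b²·d²·(b+d)²) equals 1/3. -/

import Mathlib

abbrev SB := {p : ℕ × ℕ // 0 < p.1 ∧ 0 < p.2 ∧ Nat.gcd p.1 p.2 = 1}

namespace SBproof

noncomputable def h (p : SB) : ℝ := 1 / (p.1.1 : ℝ) ^ 3 * (1 / (p.1.2 : ℝ) ^ 3)

noncomputable def f (p : SB) : ℝ :=
  1 / ((p.1.1 : ℝ) ^ 2 * (p.1.2 : ℝ) ^ 2 * ((p.1.1 : ℝ) + p.1.2) ^ 2)

def L (p : SB) : SB :=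
  ⟨(p.1.1, p.1.1 + p.1.2), p.2.1, Nat.add_pos_left p.2.1 _, by
    show Nat.gcd p.1.1 (p.1.1 + p.1.2) = 1
    rw [add_comm, Nat.gcd_add_self_right]; exact p.2.2.2⟩

def R (p : SB) : SB :=
  ⟨(p.1.1 + p.1.2, p.1.2), Nat.add_pos_left p.2.1 _, p.2.2.1, by
    show Nat.gcd (p.1.1 + p.1.2) p.1.2 = 1
    rw [Nat.gcd_add_self_left]; exact p.2.2.2⟩

/-- The set of pairs with first < second. -/
def sLt : Set SB := {p | p.1.1 < p.1.2}
def sGt : Set SB := {p | p.1.2 < p.1.1}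
def sEq : Set SB := {p | p.1.1 = p.1.2}

noncomputable def eL : SB ≃ ↥sLt where
  toFun p := ⟨L p, by simp [L, sLt, p.2.2.1]⟩
  invFun q := ⟨(q.1.1.1, q.1.1.2 - q.1.1.1), q.1.2.1, by
      have := q.2; simp only [sLt, Set.mem_setOf_eq] at this; omega, by
      show Nat.gcd _ (_ - _) = 1
      rw [Nat.gcd_sub_self_right (le_of_lt q.2)]; exact q.1.2.2.2⟩
  left_inv p := by
    ext <;> simp [L]
  right_inv q := by
    have hq := q.2
    simp only [sLt, Set.mem_setOf_eq] at hq
    ext <;> simp [L] <;> omega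
  
noncomputable def eR : SB ≃ ↥sGt where
  toFun p := ⟨R p, by simp [R, sGt, p.2.1]⟩
  invFun q := ⟨(q.1.1.1 - q.1.1.2, q.1.1.2), by
      have := q.2; simp only [sGt, Set.mem_setOf_eq] at this; omega, q.1.2.2.1, by
      show Nat.gcd (_ - _) _ = 1
      rw [Nat.gcd_sub_self_left (le_of_lt q.2)]; exact q.1.2.2.2⟩
  left_inv p := by ext <;> simp [R]
  right_inv q := by
    have hq := q.2
    simp only [sGt, Set.mem_setOf_eq] at hq
    ext <;> simp [R] <;> omega

end SBproof

namespace SBproof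

lemma cast_pos1 (p : SB) : (0:ℝ) < (p.1.1 : ℝ) := by exact_mod_cast p.2.1
lemma cast_pos2 (p : SB) : (0:ℝ) < (p.1.2 : ℝ) := by exact_mod_cast p.2.2.1

lemma sum_h : Summable h := by
  have H : Summable (fun p : ℕ × ℕ => 1 / (p.1 : ℝ) ^ 3 * (1 / (p.2 : ℝ) ^ 3)) := by
    apply Summable.mul_of_nonneg (Real.summable_one_div_nat_pow.mpr (by norm_num))
      (Real.summable_one_div_nat_pow.mpr (by norm_num)) <;>
    · intro x; positivity
  exact H.subtype _

lemma key_le {x y : ℝ} (hx : 0 < x) (hxy : x ≤ y) : (1:ℝ)/y ≤ 1/x :=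
  one_div_le_one_div_of_le hx hxy

lemma sum_f : Summable f := by
  apply Summable.of_nonneg_of_le (f := h) (fun p => by unfold f; positivity) _ sum_h
  intro p
  have hb := cast_pos1 p; have hd := cast_pos2 p
  unfold f h
  rw [div_mul_div_comm, one_mul]
  apply key_le (by positivity)
  have key : (p.1.1:ℝ) * p.1.2 ≤ ((p.1.1:ℝ) + p.1.2)^2 := by nlinarith
  nlinarith [mul_le_mul_of_nonneg_left key (show (0:ℝ) ≤ (p.1.1:ℝ)^2 * (p.1.2:ℝ)^2 by positivity)]

lemma sum_hL : Summable (fun p => h (L p)) := by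
  apply Summable.of_nonneg_of_le (f := h) (fun p => by unfold h; positivity) _ sum_h
  intro p
  have hb := cast_pos1 p; have hd := cast_pos2 p
  unfold h L
  simp only [Nat.cast_add]
  have : (1:ℝ)/((p.1.1:ℝ) + p.1.2)^3 ≤ 1/(p.1.2:ℝ)^3 :=
    key_le (by positivity) (pow_le_pow_left₀ hd.le (by linarith) 3)
  exact mul_le_mul_of_nonneg_left this (by positivity)

lemma sum_hR : Summable (fun p => h (R p)) := by
  apply Summable.of_nonneg_of_le (f := h) (fun p => by unfold h; positivity) _ sum_h
  intro p
  have hb := cast_pos1 p; have hd := cast_pos2 p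
  unfold h R
  simp only [Nat.cast_add]
  have : (1:ℝ)/((p.1.1:ℝ) + p.1.2)^3 ≤ 1/(p.1.1:ℝ)^3 :=
    key_le (by positivity) (pow_le_pow_left₀ hb.le (by linarith) 3)
  exact mul_le_mul_of_nonneg_right this (by positivity)

lemma key_identity (p : SB) : h (L p) + h (R p) = h p - 3 * f p := by
  have hb := cast_pos1 p; have hd := cast_pos2 p
  unfold h f L R
  simp only [Nat.cast_add]
  have h1 : ((p.1.1:ℝ)) ≠ 0 := ne_of_gt hb
  have h2 : ((p.1.2:ℝ)) ≠ 0 := ne_of_gt hd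
  have h3 : ((p.1.1:ℝ) + p.1.2) ≠ 0 := by positivity
  field_simp
  ring

end SBproof

namespace SBproof

def one1 : SB := ⟨(1,1), one_pos, one_pos, rfl⟩

lemma hsplit : (Set.univ : Set SB) = sLt ∪ (sEq ∪ sGt) := by
  ext p
  simp only [Set.mem_univ, Set.mem_union, sLt, sEq, sGt, Set.mem_setOf_eq, true_iff]
  omega

lemma hd1 : Disjoint sLt (sEq ∪ sGt) := by
  rw [Set.disjoint_left]
  intro p hp hq
  simp only [sLt, Set.mem_setOf_eq] at hp
  simp only [Set.mem_union, sEq, sGt, Set.mem_setOf_eq] at hq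
  omega

lemma hd2 : Disjoint sEq sGt := by
  rw [Set.disjoint_left]
  intro p hp hq
  simp only [sEq, Set.mem_setOf_eq] at hp
  simp only [sGt, Set.mem_setOf_eq] at hq
  omega

lemma eq_one1 (q : ↥sEq) : q = ⟨one1, rfl⟩ := by
  obtain ⟨⟨⟨b, d⟩, hb, hd, hg⟩, hq⟩ := q
  have hbd : b = d := hq
  subst hbd
  rw [Nat.gcd_self] at hg
  subst hg
  rfl

lemma tsum_sEq : ∑' q : ↥sEq, h q = 1 := by
  rw [tsum_eq_single (⟨one1, rfl⟩ : ↥sEq) (fun b' hb' => absurd (eq_one1 b') hb')]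
  simp [h, one1]

lemma T1 : ∑' p, h p = (∑' p, h (L p)) + (1 + ∑' p, h (R p)) := by
  have step : ∑' p : SB, h p
      = (∑' q : ↥sLt, h q) + ((∑' q : ↥sEq, h q) + (∑' q : ↥sGt, h q)) := by
    rw [← tsum_univ h, hsplit,
      Summable.tsum_union_disjoint hd1 (sum_h.subtype _) (sum_h.subtype _),
      Summable.tsum_union_disjoint hd2 (sum_h.subtype _) (sum_h.subtype _)]
  rw [step, tsum_sEq, ← Equiv.tsum_eq eL (fun q : ↥sLt => h q),
    ← Equiv.tsum_eq eR (fun q : ↥sGt => h q)]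
  rfl

lemma main : ∑' p, f p = 1 / 3 := by
  have hadd : (∑' p, h (L p)) + (∑' p, h (R p)) = (∑' p, h p) - 3 * ∑' p, f p := by
    rw [← Summable.tsum_add sum_hL sum_hR, ← tsum_mul_left, ← Summable.tsum_sub sum_h (sum_f.mul_left 3)]
    exact tsum_congr key_identity
  have := T1
  linarith

end SBproof

theorem stmt3 :
    (∑' p : {p : ℕ × ℕ // 0 < p.1 ∧ 0 < p.2 ∧ Nat.gcd p.1 p.2 = 1},
        (1 : ℝ) / ((p.1.1 : ℝ) ^ 2 * (p.1.2 : ℝ) ^ 2 * ((p.1.1 : ℝ) + p.1.2) ^ 2))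
      = 1 / 3 := by
  exact SBproof.main
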